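/- Let 0 ≤ α < 1/2 and let k be sufficiently large. Suppose n ≥ (√(1−α)/(1/2−α)^{1/2})·k·(1 + 1/(k(1−α)(1/2−α)^{1/2}))^{1/2}. If G is a graph on n vertices with at least (1/2)·C(n,2) edges, then G has an induced subgraph H on at least k vertices with minimum degree δ(H) ≥ α·|V(H)|. -/

import Mathlib

open scoped Classical

private lemma gauss_sum_real (m : ℕ) : (∑ i ∈ Finset.range m, (i:ℝ)) = m*(m-1)/2 := by
  induction m with
  | zero => simp
  | succ m ih => rw [Finset.sum_range_succ, ih]; push_cast; ring

private lemma sum_Ioc_real (k n : ℕ) (h : k ≤ n) :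
    (∑ j ∈ Finset.Ioc k n, (j:ℝ)) = ((n:ℝ)*(n+1) - (k:ℝ)*(k+1))/2 := by
  rw [← Finset.Ico_add_one_add_one_eq_Ioc, Finset.sum_Ico_eq_sub _ (by omega : k+1 ≤ n+1),
    gauss_sum_real, gauss_sum_real]
  push_cast; ring

private lemma D_erase {n : ℕ} (G : SimpleGraph (Fin n)) (S : Finset (Fin n)) (v : Fin n)
    (hv : v ∈ S) :
    (∑ w ∈ S, (S.filter (G.Adj w)).card)
      = (∑ w ∈ S.erase v, ((S.erase v).filter (G.Adj w)).card)
        + 2 * (S.filter (G.Adj v)).card := by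
  have key : ∀ (T : Finset (Fin n)) (w : Fin n),
      (T.filter (G.Adj w)).card = ∑ u ∈ T, if G.Adj w u then 1 else 0 := by
    intro T w; rw [Finset.card_filter]
  simp only [key]
  rw [← Finset.sum_erase_add S _ hv]
  have inner : ∀ w : Fin n, (∑ u ∈ S, if G.Adj w u then 1 else 0)
      = (∑ u ∈ S.erase v, if G.Adj w u then 1 else 0) + (if G.Adj w v then 1 else 0) := by
    intro w; rw [← Finset.sum_erase_add S _ hv]
  simp only [inner]
  rw [Finset.sum_add_distrib]
  have hvv : (if G.Adj v v then 1 else 0) = 0 := by simp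
  have hsym : (∑ w ∈ S.erase v, if G.Adj w v then 1 else 0)
      = ∑ u ∈ S.erase v, if G.Adj v u then 1 else 0 := by
    apply Finset.sum_congr rfl; intro w _; simp [SimpleGraph.adj_comm]
  rw [hsym, hvv]
  ring

private lemma D_le {n : ℕ} (G : SimpleGraph (Fin n)) (S : Finset (Fin n)) :
    (∑ w ∈ S, (S.filter (G.Adj w)).card) ≤ S.card * (S.card - 1) := by
  calc (∑ w ∈ S, (S.filter (G.Adj w)).card) ≤ ∑ _w ∈ S, (S.card - 1) := by
        apply Finset.sum_le_sum
        intro w hw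
        have hsub : S.filter (G.Adj w) ⊆ S.erase w := by
          intro u hu
          rw [Finset.mem_filter] at hu
          exact Finset.mem_erase.mpr ⟨(G.ne_of_adj hu.2).symm, hu.1⟩
        calc (S.filter (G.Adj w)).card ≤ (S.erase w).card := Finset.card_le_card hsub
          _ = S.card - 1 := Finset.card_erase_of_mem hw
    _ = S.card * (S.card - 1) := by rw [Finset.sum_const, smul_eq_mul]

private lemma cast_mul_pred (k : ℕ) : ((k*(k-1) : ℕ) : ℝ) ≤ (k:ℝ)*((k:ℝ)-1) := by
  cases k with
  | zero => simp
  | succ k => push_cast [Nat.succ_sub_one]; ring_nf; norm_num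

private lemma main_induction {n : ℕ} (G : SimpleGraph (Fin n)) (k : ℕ) (α : ℝ)
    (hα0 : 0 ≤ α) :
    ∀ m (S : Finset (Fin n)), S.card = m →
      (k:ℝ)*((k:ℝ)-1) + 2*α*(∑ j ∈ Finset.Ioc k m, (j:ℝ))
        < ((∑ w ∈ S, (S.filter (G.Adj w)).card : ℕ) : ℝ) →
      ∃ T : Finset (Fin n), k ≤ T.card ∧
        ∀ v ∈ T, α*(T.card:ℝ) ≤ ((T.filter (G.Adj v)).card : ℝ) := by
  intro m
  induction m using Nat.strong_induction_on with
  | _ m ih =>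
    intro S hcard hD
    by_cases hgood : ∀ v ∈ S, α*(S.card:ℝ) ≤ ((S.filter (G.Adj v)).card : ℝ)
    · refine ⟨S, ?_, hgood⟩
      by_contra hlt
      push_neg at hlt
      have hmk : m ≤ k := by omega
      have hempty : Finset.Ioc k m = ∅ := Finset.Ioc_eq_empty (by omega)
      have h1 : (∑ w ∈ S, (S.filter (G.Adj w)).card) ≤ m*(m-1) := hcard ▸ D_le G S
      have h2 : m*(m-1) ≤ k*(k-1) := Nat.mul_le_mul hmk (by omega)
      have h3 : ((∑ w ∈ S, (S.filter (G.Adj w)).card : ℕ) : ℝ) ≤ (k:ℝ)*((k:ℝ)-1) :=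
        le_trans (by exact_mod_cast Nat.cast_le.mpr (le_trans h1 h2)) (cast_mul_pred k)
      rw [hempty] at hD
      simp only [Finset.sum_empty, mul_zero, add_zero] at hD
      linarith
    · push_neg at hgood
      obtain ⟨v, hv, hdeg⟩ := hgood
      rcases le_or_gt m k with hmk | hkm
      · exfalso
        have hempty : Finset.Ioc k m = ∅ := Finset.Ioc_eq_empty (by omega)
        have h1 : (∑ w ∈ S, (S.filter (G.Adj w)).card) ≤ m*(m-1) := hcard ▸ D_le G S
        have h2 : m*(m-1) ≤ k*(k-1) := Nat.mul_le_mul hmk (by omega)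
        have h3 : ((∑ w ∈ S, (S.filter (G.Adj w)).card : ℕ) : ℝ) ≤ (k:ℝ)*((k:ℝ)-1) :=
          le_trans (by exact_mod_cast Nat.cast_le.mpr (le_trans h1 h2)) (cast_mul_pred k)
        rw [hempty] at hD
        simp only [Finset.sum_empty, mul_zero, add_zero] at hD
        linarith
      · -- delete v
        obtain ⟨m', rfl⟩ : ∃ m', m = m'+1 := ⟨m-1, by omega⟩
        have hkm' : k ≤ m' := by omega
        have hcard' : (S.erase v).card = m' := by
          rw [Finset.card_erase_of_mem hv, hcard]; omega
        have hsplit := D_erase G S v hv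
        have hsum1 := sum_Ioc_real k (m'+1) (by omega)
        have hsum2 := sum_Ioc_real k m' hkm'
        apply ih m' (by omega) (S.erase v) hcard'
        have hcast : ((∑ w ∈ S, (S.filter (G.Adj w)).card : ℕ) : ℝ)
            = ((∑ w ∈ S.erase v, ((S.erase v).filter (G.Adj w)).card : ℕ) : ℝ)
              + 2 * ((S.filter (G.Adj v)).card : ℝ) := by
          exact_mod_cast congrArg (Nat.cast : ℕ → ℝ) hsplit
        rw [hcard] at hdeg
        rw [hsum1] at hD
        rw [hsum2]
        have hdeg' : ((S.filter (G.Adj v)).card : ℝ) < α * ((m':ℝ)+1) := by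
          push_cast at hdeg ⊢; linarith
        push_cast at hD hcast hdeg' ⊢
        nlinarith [hD, hcast, hdeg', hα0]

set_option maxHeartbeats 1600000 in
private lemma analytic_lemma (α : ℝ) (hα0 : 0 ≤ α) (hα : α < 1 / 2) :
    ∀ᶠ k : ℕ in Filter.atTop, ∀ x : ℝ,
      Real.sqrt (1 - α) / Real.sqrt (1 / 2 - α) * (k : ℝ) *
          Real.sqrt (1 + 1 / ((k : ℝ) * (1 - α) * Real.sqrt (1 / 2 - α))) ≤ x →
      ((1-α)*(k:ℝ)^2 - (1+α)*(k:ℝ) < (1/2-α)*x^2 - (1/2+α)*x ∧ (k:ℝ) ≤ x) := by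
  have hβ : (0:ℝ) < 1/2 - α := by linarith
  have h1α : (0:ℝ) < 1 - α := by linarith
  set s := Real.sqrt (1/2 - α) with hs_def
  have hs : 0 < s := Real.sqrt_pos.2 hβ
  have hs2 : s^2 = 1/2 - α := Real.sq_sqrt hβ.le
  set c1 := Real.sqrt (1-α) / s with hc1_def
  have hc1pos : 0 < c1 := div_pos (Real.sqrt_pos.2 h1α) hs
  have hrt2 : (Real.sqrt (1-α))^2 = 1-α := Real.sq_sqrt h1α.le
  have hc1 : 1 ≤ c1 := by
    rw [hc1_def, le_div_iff₀ hs, one_mul]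
    exact Real.sqrt_le_sqrt (by linarith)
  have hc12 : c1^2 = (1-α)/(1/2-α) := by
    rw [hc1_def, div_pow, hrt2, hs2]
  set c2 := c1 / ((1-α)*s) with hc2_def
  have hc2pos : 0 < c2 := div_pos hc1pos (mul_pos h1α hs)
  set δ := 1/s + (1+α) - (1/2+α)*c1 with hδ_def
  have hδ : 0 < δ := by
    have hg : (1/2+α) * Real.sqrt (1-α) < 1 := by
      nlinarith [sq_nonneg ((1/2+α)*Real.sqrt (1-α) - 1), hrt2,
        pow_nonneg hα0 3, Real.sqrt_nonneg (1-α)]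
    have hδs : 0 < δ * s := by
      have heq : δ * s = 1 + (1+α)*s - (1/2+α)*Real.sqrt (1-α) := by
        rw [hδ_def, hc1_def]; field_simp
      have h0 : 0 ≤ (1+α)*s := mul_nonneg (by linarith) hs.le
      rw [heq]; linarith
    by_contra hcon
    push_neg at hcon
    have : δ*s ≤ 0 := mul_nonpos_of_nonpos_of_nonneg hcon hs.le
    linarith
  have ht : Filter.Tendsto (fun k : ℕ => (k:ℝ)) Filter.atTop Filter.atTop :=
    tendsto_natCast_atTop_atTop
  have hev1 : ∀ᶠ k : ℕ in Filter.atTop, (1:ℝ) ≤ (k:ℝ) := ht.eventually_ge_atTop 1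
  have hev2 : ∀ᶠ k : ℕ in Filter.atTop, (1/2+α)/(2*(1/2-α)) ≤ c1*(k:ℝ) := by
    have : Filter.Tendsto (fun k : ℕ => c1*(k:ℝ)) Filter.atTop Filter.atTop :=
      ht.const_mul_atTop hc1pos
    exact this.eventually_ge_atTop _
  have hev3 : ∀ᶠ k : ℕ in Filter.atTop, (1/2+α)*c2 < δ*(k:ℝ) := by
    have : Filter.Tendsto (fun k : ℕ => δ*(k:ℝ)) Filter.atTop Filter.atTop :=
      ht.const_mul_atTop hδ
    exact this.eventually_gt_atTop _
  filter_upwards [hev1, hev2, hev3] with k hk1 hk2 hk3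
  intro x hx
  have hkpos : (0:ℝ) < (k:ℝ) := lt_of_lt_of_le one_pos hk1
  set ε := 1/((k:ℝ)*(1-α)*s) with hε_def
  have hεpos : 0 < ε := by
    rw [hε_def]; positivity
  set n0 := c1 * (k:ℝ) * Real.sqrt (1+ε) with hn0_def
  have hx' : n0 ≤ x := by
    rw [hn0_def, hε_def, hc1_def, hs_def]; exact hx
  have hsq1 : 1 ≤ Real.sqrt (1+ε) := Real.one_le_sqrt.mpr (by linarith)
  have hsq2 : Real.sqrt (1+ε) ≤ 1+ε := by
    rw [Real.sqrt_le_left (by linarith : (0:ℝ) ≤ 1+ε)]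
    nlinarith
  have hsqsq : (Real.sqrt (1+ε))^2 = 1+ε := Real.sq_sqrt (by linarith)
  have he1 : (1-α)*(k:ℝ)^2*ε = (k:ℝ)/s := by
    rw [hε_def, mul_one_div, div_eq_div_iff (by positivity) hs.ne']
    ring
  have hcancel : (1/2-α) * ((1-α)/(1/2-α)) = (1-α) := by
    rw [mul_comm, div_mul_cancel₀ _ hβ.ne']
  have hn0sq : (1/2-α) * n0^2 = (1-α)*(k:ℝ)^2 + (k:ℝ)/s := by
    calc (1/2-α) * n0^2 = (1/2-α)*((1-α)/(1/2-α)) * ((k:ℝ)^2*(1+ε)) := by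
          rw [hn0_def, mul_pow, mul_pow, hsqsq, hc12]; ring
      _ = (1-α)*(k:ℝ)^2 + (1-α)*(k:ℝ)^2*ε := by rw [hcancel]; ring
      _ = (1-α)*(k:ℝ)^2 + (k:ℝ)/s := by rw [he1]
  have hc1k : c1*(k:ℝ) ≤ n0 := by
    rw [hn0_def]
    exact le_mul_of_one_le_right (by positivity) hsq1
  have hkx : (k:ℝ) ≤ x := by
    have : (k:ℝ) ≤ c1*(k:ℝ) := le_mul_of_one_le_left hkpos.le hc1
    linarith
  refine ⟨?_, hkx⟩
  have hn0le : n0 ≤ c1*(k:ℝ) + c2 := by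
    have h1 : n0 ≤ c1*(k:ℝ)*(1+ε) := by
      rw [hn0_def]
      exact mul_le_mul_of_nonneg_left hsq2 (by positivity)
    have he2 : c1*(k:ℝ)*ε = c2 := by
      rw [hε_def, hc2_def, mul_one_div, div_eq_div_iff (by positivity) (by positivity)]
      ring
    have h2 : c1*(k:ℝ)*(1+ε) = c1*(k:ℝ) + c2 := by
      rw [← he2]; ring
    linarith
  have hvert : (1/2+α)/(2*(1/2-α)) ≤ n0 := le_trans hk2 hc1k
  have hmono : (1/2-α)*n0^2 - (1/2+α)*n0 ≤ (1/2-α)*x^2 - (1/2+α)*x := by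
    have hv2 : (1/2+α) ≤ n0 * (2*(1/2-α)) := by
      rw [div_le_iff₀ (by linarith : (0:ℝ) < 2*(1/2-α))] at hvert
      exact hvert
    have hprod : 0 ≤ (1/2-α)*(x - n0) := mul_nonneg hβ.le (sub_nonneg.mpr hx')
    have hfac : 0 ≤ (1/2-α)*(x+n0) - (1/2+α) := by nlinarith [hprod]
    have key : 0 ≤ (x - n0) * ((1/2-α)*(x+n0) - (1/2+α)) :=
      mul_nonneg (sub_nonneg.mpr hx') hfac
    nlinarith [key]
  have hδk : δ*(k:ℝ) = (k:ℝ)/s + (1+α)*(k:ℝ) - (1/2+α)*(c1*(k:ℝ)) := by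
    rw [hδ_def]; ring
  have hccn0 : (1/2+α)*n0 ≤ (1/2+α)*(c1*(k:ℝ)) + (1/2+α)*c2 := by
    have h := mul_le_mul_of_nonneg_left hn0le (show (0:ℝ) ≤ 1/2+α by linarith)
    rw [mul_add] at h
    exact h
  linarith [hmono, hn0sq, hk3, hδk, hccn0]

theorem dense_graph_has_min_degree_subgraph (α : ℝ) (hα0 : 0 ≤ α) (hα : α < 1 / 2) :
    ∀ᶠ k : ℕ in Filter.atTop, ∀ n : ℕ,
      Real.sqrt (1 - α) / Real.sqrt (1 / 2 - α) * (k : ℝ) *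
          Real.sqrt (1 + 1 / ((k : ℝ) * (1 - α) * Real.sqrt (1 / 2 - α))) ≤ (n : ℝ) →
      ∀ G : SimpleGraph (Fin n),
        (n.choose 2 : ℝ) / 2 ≤ (G.edgeFinset.card : ℝ) →
        ∃ S : Finset (Fin n), k ≤ S.card ∧
          ∀ v ∈ S, α * (S.card : ℝ) ≤ ((S.filter (G.Adj v)).card : ℝ) := by
  filter_upwards [analytic_lemma α hα0 hα] with k hk
  intro n hn G hE
  obtain ⟨hineq, hknR⟩ := hk (n:ℝ) hn
  have hkn : k ≤ n := Nat.cast_le.mp hknR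
  have hDedge : (∑ w ∈ (Finset.univ : Finset (Fin n)), ((Finset.univ : Finset (Fin n)).filter (G.Adj w)).card)
      = 2 * G.edgeFinset.card := by
    rw [← SimpleGraph.sum_degrees_eq_twice_card_edges]
    apply Finset.sum_congr rfl
    intro v _
    rw [SimpleGraph.degree, SimpleGraph.neighborFinset_eq_filter]
  have hDlb : (n:ℝ)*((n:ℝ)-1)/2 ≤ ((∑ w ∈ (Finset.univ : Finset (Fin n)), ((Finset.univ : Finset (Fin n)).filter (G.Adj w)).card : ℕ) : ℝ) := by
    have h2 : ((n.choose 2 : ℕ) : ℝ) = (n:ℝ)*((n:ℝ)-1)/2 := Nat.cast_choose_two (K := ℝ) n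
    have : ((∑ w ∈ (Finset.univ : Finset (Fin n)), ((Finset.univ : Finset (Fin n)).filter (G.Adj w)).card : ℕ) : ℝ) = 2 * (G.edgeFinset.card : ℝ) := by
      exact_mod_cast congrArg (Nat.cast : ℕ → ℝ) hDedge
    rw [this]
    linarith
  have hsum := sum_Ioc_real k n hkn
  have hmain := main_induction G k α hα0 n Finset.univ (by simp)
  have hcardu : (Finset.univ : Finset (Fin n)).card = n := by simp
  apply hmain
  rw [hsum]
  have hexp : (k:ℝ)*((k:ℝ)-1) + 2*α*(((n:ℝ)*((n:ℝ)+1) - (k:ℝ)*((k:ℝ)+1))/2)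
      < (n:ℝ)*((n:ℝ)-1)/2 := by ring_nf at hineq ⊢; linarith
  linarith
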